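/- Let Γ'(y', t) = (2πt)^{-(n-1)/2} e^{-|y'|²/(2t)} be the Gaussian kernel in R^{n-1} and E the fundamental solution of the Laplace equation in R^n. Then for x' ∈ R^{n-1}\{0}, y_n > 0, t > 0, and 1 ≤ j ≤ n-1: |∫_{|y'| ≤ |x'|/2} D_{y_j}Γ'(y',t) D_{y_n}E(x'-y', y_n) dy'| ≤ C |x'|^{-n} ∫_{|y'| ≤ |x'|/(2√t)} |y'|² e^{-|y'|²} dy', with C independent of x', y_n, t. -/

import Mathlib

set_option maxHeartbeats 2000000
set_option synthInstance.maxHeartbeats 400000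

open MeasureTheory Real Pointwise

lemma gauss_fderiv (m : ℕ) (t : ℝ) (ht : t ≠ 0) (c : ℝ) (y : EuclideanSpace ℝ (Fin m)) (j : Fin m) :
    (fderiv ℝ (fun z : EuclideanSpace ℝ (Fin m) => c * Real.exp (-‖z‖^2 / (2*t))) y)
      (EuclideanSpace.single j 1)
      = c * Real.exp (-‖y‖^2 / (2*t)) * (-(y j) / t) := by
  have h1 : HasFDerivAt (fun z : EuclideanSpace ℝ (Fin m) => ‖z‖^2)
      (2 • (innerSL ℝ y)) y := by
    simpa using (hasFDerivAt_id y).norm_sq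
  have key : (fun z : EuclideanSpace ℝ (Fin m) => -‖z‖^2 / (2*t))
      = fun z : EuclideanSpace ℝ (Fin m) => (-(2*t)⁻¹) * ‖z‖^2 := by
    funext z; ring
  have h2 : HasFDerivAt (fun z : EuclideanSpace ℝ (Fin m) => -‖z‖^2 / (2*t))
      ((-(2*t)⁻¹) • (2 • (innerSL ℝ y))) y := by
    rw [key]; exact h1.const_mul _
  have h3 := (h2.exp).const_mul c
  rw [h3.fderiv]
  have hv : (innerSL ℝ y) (EuclideanSpace.single j 1) = y j := by
    simp [EuclideanSpace.inner_single_right]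
  have h4 : -‖y‖^2/(2*t) = (-(2*t)⁻¹) * ‖y‖^2 := by ring
  simp [hv, ← h4]
  ring

lemma deriv_E (cE b q yn : ℝ) (hb : 0 ≤ b) (hyn : 0 < yn) :
    deriv (fun a : ℝ => cE * (b + a^2) ^ q) yn
      = cE * (q * (b + yn^2)^(q-1) * (2*yn)) := by
  have h0 : b + yn^2 ≠ 0 := by positivity
  have h1 : HasDerivAt (fun a : ℝ => b + a^2) (2*yn) yn := by
    simpa using ((hasDerivAt_pow 2 yn).const_add b)
  have h2 := (h1.rpow_const (p := q) (Or.inl h0)).const_mul cE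
  rw [h2.deriv]
  ring

lemma odd_int_zero (m : ℕ) (r t : ℝ) (j : Fin m) :
    ∫ y in Metric.closedBall (0 : EuclideanSpace ℝ (Fin m)) r,
      (y j) * Real.exp (-‖y‖^2 / (2*t)) = 0 := by
  set f : EuclideanSpace ℝ (Fin m) → ℝ :=
    fun y => (y j) * Real.exp (-‖y‖^2 / (2*t)) with hf
  set F : EuclideanSpace ℝ (Fin m) → ℝ :=
    Set.indicator (Metric.closedBall 0 r) f with hF
  have hind : ∫ y in Metric.closedBall (0 : EuclideanSpace ℝ (Fin m)) r, f y
      = ∫ y, F y := by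
    rw [hF, integral_indicator measurableSet_closedBall]
  have hneg : ∀ y, F (-y) = - F y := by
    intro y
    by_cases h : y ∈ Metric.closedBall (0 : EuclideanSpace ℝ (Fin m)) r
    · have h' : -y ∈ Metric.closedBall (0 : EuclideanSpace ℝ (Fin m)) r := by
        simpa [Metric.mem_closedBall] using h
      rw [hF, Set.indicator_of_mem h', Set.indicator_of_mem h]
      simp [hf]
    · have h' : -y ∉ Metric.closedBall (0 : EuclideanSpace ℝ (Fin m)) r := by
        simpa [Metric.mem_closedBall] using h
      rw [hF, Set.indicator_of_notMem h', Set.indicator_of_notMem h]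
      simp
  have hcomp : ∫ y, F (-y) = ∫ y, F y := by
    have := MeasureTheory.Measure.integral_comp_smul (μ := volume) F (-1 : ℝ)
    simpa [abs_inv, abs_pow] using this
  have : ∫ y, F y = - ∫ y, F y := by
    conv_lhs => rw [← hcomp]
    simp_rw [hneg]
    exact integral_neg F
  have h0 : ∫ y, F y = 0 := by linarith
  rw [hind, h0]

lemma mvt_bound (n : ℕ) (hn : 3 ≤ n) (cE yn : ℝ) (hyn : 0 < yn)
    (x' : EuclideanSpace ℝ (Fin (n-1))) (hx : x' ≠ 0)
    (y : EuclideanSpace ℝ (Fin (n-1))) (hy : y ∈ Metric.closedBall 0 (‖x'‖/2)) :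
    |cE * ((2:ℝ) - n) * yn * ((‖x' - y‖^2 + yn^2) ^ (-(n:ℝ)/2))
     - cE * ((2:ℝ) - n) * yn * ((‖x' - 0‖^2 + yn^2) ^ (-(n:ℝ)/2))|
    ≤ (|cE| * ((n:ℝ)-2) * n * 2^(n-1) * ‖x'‖ ^ (-(n:ℝ))) * ‖y‖ := by
  have hn3 : (3:ℝ) ≤ (n:ℝ) := by exact_mod_cast hn
  have hx0 : (0:ℝ) < ‖x'‖ := norm_pos_iff.mpr hx
  set S := Metric.closedBall (0 : EuclideanSpace ℝ (Fin (n-1))) (‖x'‖/2) with hS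
  set c : ℝ := cE * ((2:ℝ) - n) * yn with hc
  set s : ℝ := -(n:ℝ)/2 with hs
  set u : EuclideanSpace ℝ (Fin (n-1)) → ℝ := fun z => ‖x' - z‖^2 + yn^2 with hu
  set φ : EuclideanSpace ℝ (Fin (n-1)) → ℝ := fun z => c * (u z ^ s) with hφ
  have hrlb : ∀ z ∈ S, ‖x'‖/2 ≤ ‖x' - z‖ := by
    intro z hz
    have hz' : ‖z‖ ≤ ‖x'‖/2 := by
      simpa [S, Metric.mem_closedBall, dist_eq_norm] using hz
    have h2 : ‖x'‖ - ‖z‖ ≤ ‖x' - z‖ := norm_sub_norm_le x' z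
    linarith
  have hulb : ∀ z ∈ S, (‖x'‖/2)^2 ≤ u z := by
    intro z hz
    have h1 := hrlb z hz
    have : (‖x'‖/2)^2 ≤ ‖x' - z‖^2 := by
      apply sq_le_sq' <;> nlinarith [norm_nonneg (x' - z)]
    simp only [hu]; nlinarith [sq_nonneg yn]
  have hupos : ∀ z, 0 < u z := by
    intro z; have := sq_nonneg ‖x' - z‖
    simp only [hu]; positivity
  set Dφ : EuclideanSpace ℝ (Fin (n-1)) → (EuclideanSpace ℝ (Fin (n-1)) →L[ℝ] ℝ) :=
    fun z => c • ((s * u z ^ (s - 1)) • (2 • ((innerSL ℝ) z - (innerSL ℝ) x'))) with hDφ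
  have hderiv : ∀ z ∈ S, HasFDerivWithinAt φ (Dφ z) S z := by
    intro z hz
    have h1 : HasFDerivAt (fun w : EuclideanSpace ℝ (Fin (n-1)) => x' - w)
        (-(ContinuousLinearMap.id ℝ _)) z := by
      simpa using ((hasFDerivAt_id z).const_sub x')
    have h2 : HasFDerivAt (fun w : EuclideanSpace ℝ (Fin (n-1)) => ‖x' - w‖^2)
        (2 • ((innerSL ℝ) z - (innerSL ℝ) x')) z := by
      simpa using h1.norm_sq
    have h3 : HasFDerivAt u (2 • ((innerSL ℝ) z - (innerSL ℝ) x')) z := by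
      simpa [hu] using h2.add_const (yn^2)
    have h4 := (h3.rpow_const (p := s) (Or.inl (hupos z).ne')).const_mul c
    have h5 : HasFDerivAt φ (Dφ z) z := by
      simpa [hφ, hDφ, smul_smul] using h4
    exact h5.hasFDerivWithinAt
  set M : ℝ := |cE| * ((n:ℝ)-2) * n * 2^(n-1) * ‖x'‖ ^ (-(n:ℝ)) with hM
  have hbound : ∀ z ∈ S, ‖Dφ z‖ ≤ M := by
    intro z hz
    have hup := hupos z
    have hs1 : (0:ℝ) < u z ^ (s-1) := rpow_pos_of_pos hup _
    have hr := hrlb z hz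
    have step1 : ‖Dφ z‖ ≤ |c| * (|s| * u z ^ (s-1)) * (2 * ‖x' - z‖) := by
      have e1 : ((innerSL ℝ) z - (innerSL ℝ) x') = (innerSL ℝ) (z - x') := by
        rw [map_sub]
      have e2 : ‖(2:ℕ) • ((innerSL ℝ) (z - x'))‖ ≤ 2 * ‖x' - z‖ := by
        rw [two_smul]
        calc ‖(innerSL ℝ) (z - x') + (innerSL ℝ) (z - x')‖
            ≤ ‖(innerSL ℝ) (z - x')‖ + ‖(innerSL ℝ) (z - x')‖ := norm_add_le _ _
          _ = 2 * ‖z - x'‖ := by rw [innerSL_apply_norm]; ring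
          _ = 2 * ‖x' - z‖ := by rw [norm_sub_rev]
      calc ‖Dφ z‖ = |c| * (|s * u z ^ (s-1)| * ‖(2:ℕ) • ((innerSL ℝ) z - (innerSL ℝ) x')‖) := by
            simp only [hDφ]
            rw [norm_smul c ((s * u z ^ (s-1)) • (2:ℕ) • ((innerSL ℝ) z - (innerSL ℝ) x')),
              norm_smul (s * u z ^ (s-1)) ((2:ℕ) • ((innerSL ℝ) z - (innerSL ℝ) x'))]
            rw [Real.norm_eq_abs, Real.norm_eq_abs]
        _ ≤ |c| * ((|s| * u z ^ (s-1)) * (2 * ‖x' - z‖)) := by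
            rw [e1] at *
            apply mul_le_mul_of_nonneg_left _ (abs_nonneg c)
            rw [abs_mul, abs_of_pos hs1]
            exact mul_le_mul_of_nonneg_left e2 (by positivity)
        _ = |c| * (|s| * u z ^ (s-1)) * (2 * ‖x' - z‖) := by ring
    have hcabs : |c| = |cE| * ((n:ℝ)-2) * yn := by
      rw [hc, abs_mul, abs_mul, abs_of_pos hyn]
      have : |(2:ℝ) - n| = (n:ℝ) - 2 := by rw [abs_sub_comm]; exact abs_of_pos (by linarith)
      rw [this]
    have hsabs : |s| = (n:ℝ)/2 := by
      rw [hs, abs_div, abs_neg, abs_two]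
      congr 1
      exact abs_of_nonneg (by positivity)
    -- |c| * |s| * u^{s-1} * 2r = |cE|(n-2)n * (yn * r) * u^{s-1}
    have step2 : |c| * (|s| * u z ^ (s-1)) * (2 * ‖x' - z‖)
        = (|cE| * ((n:ℝ)-2) * n) * (yn * ‖x' - z‖) * u z ^ (s-1) := by
      rw [hcabs, hsabs]; ring
    have hamgm : yn * ‖x' - z‖ ≤ u z / 2 := by
      simp only [hu]
      nlinarith [sq_nonneg (yn - ‖x' - z‖)]
    have step3 : (|cE| * ((n:ℝ)-2) * n) * (yn * ‖x' - z‖) * u z ^ (s-1)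
        ≤ (|cE| * ((n:ℝ)-2) * n / 2) * u z ^ s := by
      have h1 : (|cE| * ((n:ℝ)-2) * n) * (yn * ‖x' - z‖) * u z ^ (s-1)
          ≤ (|cE| * ((n:ℝ)-2) * n) * (u z / 2) * u z ^ (s-1) := by
        have hpos : (0:ℝ) ≤ |cE| * ((n:ℝ)-2) * n :=
          mul_nonneg (mul_nonneg (abs_nonneg _) (by linarith)) (Nat.cast_nonneg n)
        have := mul_le_mul_of_nonneg_left hamgm hpos
        exact mul_le_mul_of_nonneg_right this hs1.le
      have h2 : (|cE| * ((n:ℝ)-2) * n) * (u z / 2) * u z ^ (s-1)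
          = (|cE| * ((n:ℝ)-2) * n / 2) * (u z ^ (s-1) * u z) := by ring
      have h3 : u z ^ (s-1) * u z = u z ^ s := by
        rw [← Real.rpow_add_one hup.ne']
        ring_nf
      rw [h3] at h2; linarith
    have step4 : u z ^ s ≤ ‖x'‖ ^ (-(n:ℝ)) * 2^n := by
      have hb : (0:ℝ) < (‖x'‖/2)^2 := by positivity
      have hsle : s ≤ 0 := by
        rw [hs]
        have : (0:ℝ) ≤ (n:ℝ) := Nat.cast_nonneg n
        linarith
      have h1 : u z ^ s ≤ ((‖x'‖/2)^2) ^ s :=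
        Real.rpow_le_rpow_of_nonpos hb (hulb z hz) hsle
      have h2 : ((‖x'‖/2)^2 : ℝ) ^ s = (‖x'‖/2) ^ (-(n:ℝ)) := by
        rw [← Real.rpow_natCast (‖x'‖/2) 2, ← Real.rpow_mul (by positivity)]
        congr 1; rw [hs]; push_cast; ring
      have h3 : ((‖x'‖/2) : ℝ) ^ (-(n:ℝ)) = ‖x'‖ ^ (-(n:ℝ)) * 2^n := by
        rw [Real.div_rpow (norm_nonneg _) (by norm_num)]
        rw [Real.rpow_neg (by norm_num : (0:ℝ) ≤ 2), Real.rpow_natCast]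
        field_simp
      rw [h2, h3] at h1; exact h1
    have step5 : (|cE| * ((n:ℝ)-2) * n / 2) * (‖x'‖ ^ (-(n:ℝ)) * 2^n) = M := by
      rw [hM]
      have h2 : (2:ℝ)^n = 2 * 2^(n-1) := by
        conv_lhs => rw [show n = (n-1)+1 by omega]
        ring
      rw [h2]; ring
    calc ‖Dφ z‖ ≤ |c| * (|s| * u z ^ (s-1)) * (2 * ‖x' - z‖) := step1
      _ = (|cE| * ((n:ℝ)-2) * n) * (yn * ‖x' - z‖) * u z ^ (s-1) := step2
      _ ≤ (|cE| * ((n:ℝ)-2) * n / 2) * u z ^ s := step3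
      _ ≤ (|cE| * ((n:ℝ)-2) * n / 2) * (‖x'‖ ^ (-(n:ℝ)) * 2^n) := by
          apply mul_le_mul_of_nonneg_left step4
          have h0 : (0:ℝ) ≤ (n:ℝ)-2 := by linarith
          have := abs_nonneg cE
          positivity
      _ = M := step5
  have hmvt := Convex.norm_image_sub_le_of_norm_hasFDerivWithin_le hderiv hbound
    (convex_closedBall _ _) (Metric.mem_closedBall_self (by positivity)) hy
  have : |φ y - φ 0| ≤ M * ‖y‖ := by
    simpa [Real.norm_eq_abs] using hmvt
  calc |cE * ((2:ℝ) - n) * yn * ((‖x' - y‖^2 + yn^2) ^ (-(n:ℝ)/2))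
     - cE * ((2:ℝ) - n) * yn * ((‖x' - 0‖^2 + yn^2) ^ (-(n:ℝ)/2))| = |φ y - φ 0| := by
        simp [hφ, hu, hc, hs]
    _ ≤ M * ‖y‖ := this

lemma integrableOn_ball_of_continuous {m : ℕ} {g : EuclideanSpace ℝ (Fin m) → ℝ} (hg : Continuous g)
    (R : ℝ) : IntegrableOn g (Metric.closedBall (0 : EuclideanSpace ℝ (Fin m)) R) :=
  hg.continuousOn.integrableOn_compact (isCompact_closedBall _ _)

lemma scale_bound (m : ℕ) (r t : ℝ) (hr : 0 ≤ r) (ht : 0 < t) :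
    ∫ y in Metric.closedBall (0 : EuclideanSpace ℝ (Fin m)) r,
        ‖y‖^2 * Real.exp (-‖y‖^2 / (2*t))
    ≤ Real.sqrt (2*t) ^ (m+2) *
      ∫ z in Metric.closedBall (0 : EuclideanSpace ℝ (Fin m)) (r / Real.sqrt t),
        ‖z‖^2 * Real.exp (-‖z‖^2) := by
  set s : ℝ := Real.sqrt (2*t) with hsdef
  have hs : 0 < s := Real.sqrt_pos.mpr (by linarith)
  have hs2 : s^2 = 2*t := Real.sq_sqrt (by linarith)
  set f : EuclideanSpace ℝ (Fin m) → ℝ := fun y => ‖y‖^2 * Real.exp (-‖y‖^2 / (2*t)) with hf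
  set g : EuclideanSpace ℝ (Fin m) → ℝ := fun z => ‖z‖^2 * Real.exp (-‖z‖^2) with hg
  have hfg : ∀ z, f (s • z) = s^2 * g z := by
    intro z
    have h1 : ‖s • z‖ = s * ‖z‖ := by
      rw [norm_smul, Real.norm_eq_abs, abs_of_pos hs]
    simp only [hf, hg, h1]
    rw [mul_pow, hs2]
    have : -(2*t*‖z‖^2) / (2*t) = -‖z‖^2 := by field_simp
    rw [this]
    ring
  have hmap : s • Metric.closedBall (0 : EuclideanSpace ℝ (Fin m)) (r/s)
      = Metric.closedBall 0 r := by
    rw [smul_closedBall s (0 : EuclideanSpace ℝ (Fin m)) (by positivity)]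
    rw [smul_zero, Real.norm_eq_abs, abs_of_pos hs]
    congr 1
    field_simp
  have hcv := MeasureTheory.Measure.setIntegral_comp_smul_of_pos (volume : Measure (EuclideanSpace ℝ (Fin m))) f
      (Metric.closedBall 0 (r/s)) hs
  rw [hmap] at hcv
  have hrank : Module.finrank ℝ (EuclideanSpace ℝ (Fin m)) = m := by
    simp [finrank_euclideanSpace]
  rw [hrank] at hcv
  -- hcv : ∫ z in ball(r/s), f (s•z) = (s^m)⁻¹ • ∫ y in ball r, f y
  have heq : ∫ y in Metric.closedBall (0 : EuclideanSpace ℝ (Fin m)) r, f y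
      = s^(m+2) * ∫ z in Metric.closedBall (0 : EuclideanSpace ℝ (Fin m)) (r/s), g z := by
    have h1 : ∫ z in Metric.closedBall (0 : EuclideanSpace ℝ (Fin m)) (r/s), f (s • z)
        = s^2 * ∫ z in Metric.closedBall (0 : EuclideanSpace ℝ (Fin m)) (r/s), g z := by
      simp_rw [hfg]
      exact integral_const_mul _ _
    rw [h1] at hcv
    have hsm : (0:ℝ) < s^m := by positivity
    rw [smul_eq_mul] at hcv
    have hF : ∫ y in Metric.closedBall (0 : EuclideanSpace ℝ (Fin m)) r, f y
        = s^m * (s^2 * ∫ z in Metric.closedBall (0 : EuclideanSpace ℝ (Fin m)) (r/s), g z) := by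
      rw [hcv]; field_simp
    rw [hF]; ring
  rw [heq]
  apply mul_le_mul_of_nonneg_left _ (by positivity)
  apply setIntegral_mono_set
  · exact integrableOn_ball_of_continuous (by continuity) _
  · filter_upwards with z
    simp only [hg]
    positivity
  · apply HasSubset.Subset.eventuallyLE
    apply Metric.closedBall_subset_closedBall
    have hts : Real.sqrt t ≤ s := by
      rw [hsdef]
      apply Real.sqrt_le_sqrt; linarith
    have htp : 0 < Real.sqrt t := Real.sqrt_pos.mpr ht
    exact div_le_div_of_nonneg_left hr htp hts

/-- near-singularity estimate for
`∫_{|y'| ≤ |x'|/2} D_{y_j}Γ'(y',t) D_{y_n}E(x'-y',y_n) dy'`, where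
`Γ'(y',t) = (2πt)^{-(n-1)/2} e^{-|y'|²/(2t)}` is the Gaussian kernel in `ℝ^{n-1}` and
`E(x) = c_n |x|^{2-n}` the fundamental solution of the Laplacian in `ℝ^n`. -/
theorem stmt_3 (n : ℕ) (hn : 3 ≤ n) (cE : ℝ) :
    ∃ C : ℝ, ∀ x' : EuclideanSpace ℝ (Fin (n-1)), x' ≠ 0 → ∀ yn t : ℝ, 0 < yn → 0 < t →
      ∀ j : Fin (n-1),
      |∫ y' in Metric.closedBall (0 : EuclideanSpace ℝ (Fin (n-1))) (‖x'‖/2),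
          (fderiv ℝ (fun z' : EuclideanSpace ℝ (Fin (n-1)) =>
              (2 * Real.pi * t) ^ (-((n:ℝ)-1)/2) * Real.exp (-‖z'‖^2 / (2*t))) y')
            (EuclideanSpace.single j 1)
          * deriv (fun a : ℝ => cE * (‖x' - y'‖^2 + a^2) ^ (((2:ℝ) - n)/2)) yn|
      ≤ C * ‖x'‖ ^ (-(n:ℝ)) *
        ∫ y' in Metric.closedBall (0 : EuclideanSpace ℝ (Fin (n-1))) (‖x'‖/(2 * Real.sqrt t)),
          ‖y'‖^2 * Real.exp (-‖y'‖^2) := by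
  have hn3 : (3:ℝ) ≤ (n:ℝ) := by exact_mod_cast hn
  set K : ℝ := |cE| * ((n:ℝ)-2) * n * 2^(n-1) with hK
  have hKpos : 0 ≤ K := by
    have : (0:ℝ) ≤ (n:ℝ)-2 := by linarith
    positivity
  refine ⟨K * (2 * Real.pi ^ (-((n:ℝ)-1)/2)), ?_⟩
  intro x' hx yn t hyn ht j
  have hx0 : (0:ℝ) < ‖x'‖ := norm_pos_iff.mpr hx
  set S := Metric.closedBall (0 : EuclideanSpace ℝ (Fin (n-1))) (‖x'‖/2) with hS
  set ct : ℝ := (2 * Real.pi * t) ^ (-((n:ℝ)-1)/2) with hct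
  have hctpos : 0 < ct := Real.rpow_pos_of_pos (by positivity) _
  set g : EuclideanSpace ℝ (Fin (n-1)) → ℝ :=
    fun y => ct * Real.exp (-‖y‖^2 / (2*t)) * (-(y j) / t) with hgdef
  set φ : EuclideanSpace ℝ (Fin (n-1)) → ℝ :=
    fun y => cE * ((2:ℝ) - n) * yn * ((‖x' - y‖^2 + yn^2) ^ (-(n:ℝ)/2)) with hφdef
  set M : ℝ := K * ‖x'‖ ^ (-(n:ℝ)) with hM
  have hMpos : 0 ≤ M := by
    apply mul_nonneg hKpos
    positivity
  -- pointwise identification of the integrand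
  have hpt : ∀ y : EuclideanSpace ℝ (Fin (n-1)),
      (fderiv ℝ (fun z' : EuclideanSpace ℝ (Fin (n-1)) =>
          (2 * Real.pi * t) ^ (-((n:ℝ)-1)/2) * Real.exp (-‖z'‖^2 / (2*t))) y)
        (EuclideanSpace.single j 1)
      * deriv (fun a : ℝ => cE * (‖x' - y‖^2 + a^2) ^ (((2:ℝ) - n)/2)) yn
      = g y * φ y := by
    intro y
    rw [gauss_fderiv (n-1) t ht.ne' _ y j,
      deriv_E cE (‖x' - y‖^2) (((2:ℝ) - n)/2) yn (sq_nonneg _) hyn]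
    have hq1 : ((2:ℝ) - n)/2 - 1 = -(n:ℝ)/2 := by ring
    rw [hq1]
    simp only [hgdef, hφdef, hct]
    ring
  -- continuity and integrability
  have hcoord : Continuous fun y : EuclideanSpace ℝ (Fin (n-1)) => y j :=
    (EuclideanSpace.proj (𝕜 := ℝ) j).continuous
  have hgcont : Continuous g := by
    apply Continuous.mul
    · exact continuous_const.mul (Real.continuous_exp.comp
        (((continuous_norm.pow 2).neg).div_const (2*t)))
    · exact (hcoord.neg).div_const t
  have hupos : ∀ y : EuclideanSpace ℝ (Fin (n-1)), (0:ℝ) < ‖x' - y‖^2 + yn^2 := by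
    intro y
    have := sq_nonneg ‖x' - y‖
    positivity
  have hφcont : Continuous φ := by
    apply continuous_const.mul
    apply Continuous.rpow_const
    · exact ((continuous_const.sub continuous_id).norm.pow 2).add continuous_const
    · exact fun y => Or.inl (hupos y).ne'
  have Ig : IntegrableOn g S := integrableOn_ball_of_continuous hgcont _
  have Igφ : IntegrableOn (fun y => g y * φ y) S :=
    integrableOn_ball_of_continuous (hgcont.mul hφcont) _
  -- mean zero of g on S
  have hg0 : ∫ y in S, g y = 0 := by
    have h1 : ∀ y : EuclideanSpace ℝ (Fin (n-1)),
        g y = (-(ct/t)) * ((y j) * Real.exp (-‖y‖^2 / (2*t))) := by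
      intro y; simp only [hgdef]; ring
    simp only [h1]
    rw [integral_const_mul, odd_int_zero]
    ring
  -- subtract the mean value
  have hsplit : ∫ y in S, g y * φ y = ∫ y in S, g y * (φ y - φ 0) := by
    have h1 : ∫ y in S, g y * (φ y - φ 0)
        = (∫ y in S, g y * φ y) - ∫ y in S, g y * φ 0 := by
      simp_rw [mul_sub]
      exact integral_sub Igφ (Ig.mul_const (φ 0))
    rw [h1, integral_mul_const, hg0]
    ring
  -- coordinate bound
  have habs : ∀ y : EuclideanSpace ℝ (Fin (n-1)), |y j| ≤ ‖y‖ := by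
    intro y
    have h1 : (inner ℝ (EuclideanSpace.single j (1:ℝ)) y : ℝ) = y j := by
      simp [EuclideanSpace.inner_single_left]
    calc |y j| = |(inner ℝ (EuclideanSpace.single j (1:ℝ)) y : ℝ)| := by rw [h1]
      _ ≤ ‖EuclideanSpace.single j (1:ℝ)‖ * ‖y‖ := abs_real_inner_le_norm _ _
      _ = ‖y‖ := by rw [EuclideanSpace.norm_single]; simp
  -- pointwise domination
  have hdom : ∀ y ∈ S, |g y * (φ y - φ 0)|
      ≤ (ct/t * M) * (‖y‖^2 * Real.exp (-‖y‖^2 / (2*t))) := by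
    intro y hy
    have h1 : |g y| ≤ ct * Real.exp (-‖y‖^2 / (2*t)) * (‖y‖/t) := by
      have : |g y| = ct * Real.exp (-‖y‖^2 / (2*t)) * (|y j|/t) := by
        simp only [hgdef]
        rw [abs_mul, abs_mul]
        rw [abs_of_pos hctpos, abs_of_pos (Real.exp_pos _)]
        rw [abs_div, abs_neg, abs_of_pos ht]
      rw [this]
      have := habs y
      have h2 : |y j|/t ≤ ‖y‖/t := by
        gcongr
      apply mul_le_mul_of_nonneg_left h2
      positivity
    have h2 : |φ y - φ 0| ≤ M * ‖y‖ := by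
      have := mvt_bound n hn cE yn hyn x' hx y hy
      simpa only [hφdef, hM, hK] using this
    calc |g y * (φ y - φ 0)| = |g y| * |φ y - φ 0| := abs_mul _ _
      _ ≤ (ct * Real.exp (-‖y‖^2 / (2*t)) * (‖y‖/t)) * (M * ‖y‖) := by
          apply mul_le_mul h1 h2 (abs_nonneg _)
          positivity
      _ = (ct/t * M) * (‖y‖^2 * Real.exp (-‖y‖^2 / (2*t))) := by ring
  -- assemble
  set I : ℝ := ∫ y' in Metric.closedBall (0 : EuclideanSpace ℝ (Fin (n-1)))
      (‖x'‖/(2 * Real.sqrt t)), ‖y'‖^2 * Real.exp (-‖y'‖^2) with hI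
  have hrad : (‖x'‖/2) / Real.sqrt t = ‖x'‖ / (2 * Real.sqrt t) := by
    rw [div_div]
  have hscale : ∫ y in S, ‖y‖^2 * Real.exp (-‖y‖^2 / (2*t))
      ≤ Real.sqrt (2*t) ^ ((n-1)+2) * I := by
    have := scale_bound (n-1) (‖x'‖/2) t (by positivity) ht
    rw [hrad] at this
    exact this
  have harith : ct/t * Real.sqrt (2*t) ^ ((n-1)+2) = 2 * Real.pi ^ (-((n:ℝ)-1)/2) := by
    have h2t : (0:ℝ) < 2*t := by linarith
    have hm2 : (n-1)+2 = n+1 := by omega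
    rw [hm2]
    have hsq : Real.sqrt (2*t) ^ (n+1) = (2*t) ^ (((n:ℝ)+1)/2) := by
      rw [Real.sqrt_eq_rpow, ← Real.rpow_natCast ((2*t) ^ ((1:ℝ)/2)) (n+1),
        ← Real.rpow_mul h2t.le]
      push_cast
      ring_nf
    have hsplit2 : ct = (2*t) ^ (-((n:ℝ)-1)/2) * Real.pi ^ (-((n:ℝ)-1)/2) := by
      rw [hct, show (2 * Real.pi * t) = (2*t) * Real.pi by ring,
        Real.mul_rpow h2t.le Real.pi_pos.le]
    rw [hsq, hsplit2]
    have hcomb : (2*t) ^ (-((n:ℝ)-1)/2) * (2*t) ^ (((n:ℝ)+1)/2) = 2*t := by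
      rw [← Real.rpow_add h2t]
      have : -((n:ℝ)-1)/2 + ((n:ℝ)+1)/2 = 1 := by ring
      rw [this, Real.rpow_one]
    have hre : (2*t) ^ (-((n:ℝ)-1)/2) * Real.pi ^ (-((n:ℝ)-1)/2) / t * (2*t) ^ (((n:ℝ)+1)/2)
        = ((2*t) ^ (-((n:ℝ)-1)/2) * (2*t) ^ (((n:ℝ)+1)/2)) * Real.pi ^ (-((n:ℝ)-1)/2) / t := by
      ring
    rw [hre, hcomb]
    field_simp
  calc |∫ y' in S,
          (fderiv ℝ (fun z' : EuclideanSpace ℝ (Fin (n-1)) =>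
              (2 * Real.pi * t) ^ (-((n:ℝ)-1)/2) * Real.exp (-‖z'‖^2 / (2*t))) y')
            (EuclideanSpace.single j 1)
          * deriv (fun a : ℝ => cE * (‖x' - y'‖^2 + a^2) ^ (((2:ℝ) - n)/2)) yn|
      = |∫ y in S, g y * (φ y - φ 0)| := by
        rw [← hsplit]
        congr 1
        exact integral_congr_ae (Filter.Eventually.of_forall hpt)
    _ ≤ ∫ y in S, |g y * (φ y - φ 0)| := by
        have := norm_integral_le_integral_norm (μ := volume.restrict S)
          (fun y => g y * (φ y - φ 0))
        simpa [Real.norm_eq_abs, abs_mul] using this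
    _ ≤ ∫ y in S, (ct/t * M) * (‖y‖^2 * Real.exp (-‖y‖^2 / (2*t))) := by
        apply setIntegral_mono_on
        · exact integrableOn_ball_of_continuous
            ((hgcont.mul (hφcont.sub continuous_const)).abs) _
        · exact (integrableOn_ball_of_continuous
            (by exact continuous_const.mul ((continuous_norm.pow 2).mul
              (Real.continuous_exp.comp (((continuous_norm.pow 2).neg).div_const (2*t))))) _)
        · exact measurableSet_closedBall
        · exact hdom
    _ = (ct/t * M) * ∫ y in S, ‖y‖^2 * Real.exp (-‖y‖^2 / (2*t)) := integral_const_mul _ _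
    _ ≤ (ct/t * M) * (Real.sqrt (2*t) ^ ((n-1)+2) * I) := by
        apply mul_le_mul_of_nonneg_left hscale
        positivity
    _ = (K * (2 * Real.pi ^ (-((n:ℝ)-1)/2))) * ‖x'‖ ^ (-(n:ℝ)) * I := by
        rw [hM]
        have : ct/t * (K * ‖x'‖ ^ (-(n:ℝ))) * (Real.sqrt (2*t) ^ ((n-1)+2) * I)
            = (ct/t * Real.sqrt (2*t) ^ ((n-1)+2)) * K * ‖x'‖ ^ (-(n:ℝ)) * I := by ring
        rw [this, harith]
        ring
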